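/- We have $\sum_{n=1}^{\infty} \frac{\mu(n)}{n^2 \operatorname{lcm}(5,n)} = \frac{1}{\zeta(3)} \cdot \frac{5^2-1}{5^3-1}$. -/

import Mathlib

open ArithmeticFunction
open scoped ArithmeticFunction.Moebius

namespace Stmt1Aux

noncomputable def g (n : ℕ) : ℂ := (μ n : ℂ) / (n : ℂ) ^ 3

lemma term_eq (n : ℕ) : LSeries.term (fun n => (μ n : ℂ)) 3 n = g n := by
  rcases eq_or_ne n 0 with rfl | hn
  · simp [g, LSeries.term]
  · rw [LSeries.term_of_ne_zero hn, g, show (3 : ℂ) = ((3 : ℕ) : ℂ) by norm_num,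
      Complex.cpow_natCast]

lemma summable_g : Summable g := by
  have h : LSeriesSummable (fun n => (μ n : ℂ)) 3 :=
    ArithmeticFunction.LSeriesSummable_moebius_iff.mpr (by norm_num)
  exact (summable_congr term_eq).mp h

lemma tsum_g : ∑' n, g n = 1 / riemannZeta 3 := by
  have h3 : (1 : ℝ) < (3 : ℂ).re := by norm_num
  have hmul := LSeries_one_mul_Lseries_moebius h3
  rw [LSeries_one_eq_riemannZeta h3] at hmul
  have hz : riemannZeta 3 ≠ 0 := riemannZeta_ne_zero_of_one_lt_re h3
  have : LSeries (fun n => (μ n : ℂ)) 3 = ∑' n, g n := tsum_congr term_eq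
  rw [this] at hmul
  rw [mul_comm] at hmul
  exact eq_one_div_of_mul_eq_one_left hmul

noncomputable def S : Set ℕ := {n | 5 ∣ n}

lemma g1_def : True := trivial

end Stmt1Aux

open Stmt1Aux in
/-- `∑ μ(n)/(n² · lcm(5,n)) = (1/ζ(3)) · (5²-1)/(5³-1)`. -/
theorem stmt_1 :
    ∑' n : ℕ, (μ n : ℂ) / ((n : ℂ) ^ 2 * (Nat.lcm 5 n : ℂ)) =
      (1 / riemannZeta 3) * (((5 : ℂ) ^ 2 - 1) / ((5 : ℂ) ^ 3 - 1)) := by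
  classical
  set S : Set ℕ := {n | (5 : ℕ) ∣ n} with hS
  set g1 : ℕ → ℂ := Sᶜ.indicator g with hg1
  set g2 : ℕ → ℂ := S.indicator g with hg2
  have hsum1 : Summable g1 := summable_g.indicator _
  have hsum2 : Summable g2 := summable_g.indicator _
  -- reindex g2
  have hinj : Function.Injective (fun m : ℕ => 5 * m) := fun a b h =>
    Nat.eq_of_mul_eq_mul_left (by norm_num) h
  have hrange : Function.support g2 ⊆ Set.range (fun m : ℕ => 5 * m) := by
    intro x hx
    have h5 : (5:ℕ) ∣ x := by
      by_contra h
      have hxS : x ∉ S := h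
      exact hx (Set.indicator_of_notMem hxS g)
    obtain ⟨c, rfl⟩ := h5
    exact ⟨c, rfl⟩
  have hre : ∑' m : ℕ, g2 (5 * m) = ∑' n, g2 n := hinj.tsum_eq hrange
  -- termwise: g2 (5*m) = -(1/125) * g1 m
  have hterm : ∀ m : ℕ, g2 (5 * m) = -(1/125) * g1 m := by
    intro m
    have h5 : (5:ℕ) ∣ 5 * m := ⟨m, rfl⟩
    rcases Classical.em ((5:ℕ) ∣ m) with hm | hm
    · have hns : ¬ Squarefree (5 * m) := by
        intro hsf
        have : (5 : ℕ) = 1 := Nat.isUnit_iff.mp (hsf 5 (by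
          obtain ⟨k, rfl⟩ := hm
          exact ⟨k, by ring⟩))
        omega
      have : μ (5 * m) = 0 := moebius_eq_zero_of_not_squarefree hns
      simp [hg2, hg1, Set.indicator, hS, h5, hm, g, this]
    · have hm0 : m ≠ 0 := by rintro rfl; exact hm ⟨0, rfl⟩
      have hcop : Nat.Coprime 5 m := (Nat.Prime.coprime_iff_not_dvd (by norm_num)).mpr hm
      have hmu : μ (5 * m) = μ 5 * μ m := isMultiplicative_moebius.map_mul_of_coprime hcop
      have hmu5 : μ 5 = -1 := moebius_apply_prime (by norm_num)
      have : g2 (5 * m) = ((μ (5*m) : ℤ) : ℂ) / ((5*m : ℕ) : ℂ)^3 := by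
        simp [hg2, Set.indicator, hS, h5, g]
      rw [this, hmu, hmu5]
      have : g1 m = (μ m : ℂ) / (m:ℂ)^3 := by
        simp [hg1, Set.indicator, hS, hm, g]
      rw [this]
      have hmc : ((m:ℕ):ℂ) ≠ 0 := Nat.cast_ne_zero.mpr hm0
      push_cast
      rw [mul_pow]
      field_simp
      norm_num
  have hre2 : ∑' n, g2 n = -(1/125) * ∑' n, g1 n := by
    rw [← hre, tsum_congr hterm, tsum_mul_left]
  -- split total sum
  have hsplit : ∑' n, g n = (∑' n, g1 n) + ∑' n, g2 n := by
    rw [← Summable.tsum_add hsum1 hsum2]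
    refine tsum_congr fun n => ?_
    rw [add_comm]
    exact congrFun (Set.indicator_self_add_compl S g).symm n
  -- termwise identity for the target
  have htgt : ∀ n : ℕ, (μ n : ℂ) / ((n : ℂ) ^ 2 * (Nat.lcm 5 n : ℂ)) =
      (1/5) * g1 n + g2 n := by
    intro n
    rcases eq_or_ne n 0 with rfl | hn
    · simp [hg1, hg2, Set.indicator, hS, g]
    rcases Classical.em ((5:ℕ) ∣ n) with h | h
    · have hl : Nat.lcm 5 n = n := by
        rw [Nat.lcm, Nat.gcd_eq_left h, Nat.mul_div_cancel_left n (by norm_num)]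
      simp only [hl, hg1, hg2, Set.indicator, hS]
      simp [h, g, pow_succ]
    · have hcop : Nat.Coprime 5 n := (Nat.Prime.coprime_iff_not_dvd (by norm_num)).mpr h
      have hl : Nat.lcm 5 n = 5 * n := hcop.lcm_eq_mul
      simp only [hl, hg1, hg2, Set.indicator, hS]
      simp only [h, Set.mem_setOf_eq, if_neg h, Set.mem_compl_iff, not_false_iff, if_pos,
        g]
      push_cast
      have hnc : (n:ℂ) ≠ 0 := Nat.cast_ne_zero.mpr hn
      field_simp
      ring
  calc ∑' n : ℕ, (μ n : ℂ) / ((n : ℂ) ^ 2 * (Nat.lcm 5 n : ℂ))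
      = ∑' n, ((1/5) * g1 n + g2 n) := tsum_congr htgt
    _ = (1/5) * (∑' n, g1 n) + ∑' n, g2 n := by
        rw [Summable.tsum_add (hsum1.mul_left _) hsum2, tsum_mul_left]
    _ = (1 / riemannZeta 3) * (((5 : ℂ) ^ 2 - 1) / ((5 : ℂ) ^ 3 - 1)) := by
        have hT : (∑' n, g1 n) + ∑' n, g2 n = 1 / riemannZeta 3 := by
          rw [← hsplit, tsum_g]
        rw [hre2] at hT ⊢
        norm_num
        linear_combination (24/124 : ℂ) * hT
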